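/- Let T be a shape-regular element with diameter h_T. There exist constants C_1, C_2 > 0 independent of h_T such that for every weak function v = {v_0, v_b} in the local WG space (v_0 ∈ P_k(T), v_b ∈ P_{k-1}(e) on each face e): C_1 (‖∇v_0‖_T^2 + h_T^{-1}‖Q_b v_0 - v_b‖_{∂T}^2) ≤ ‖∇_w v‖_T^2 + h_T^{-1}‖Q_b v_0 - v_b‖_{∂T}^2 ≤ C_2 (‖∇v_0‖_T^2 + h_T^{-1}‖Q_b v_0 - v_b‖_{∂T}^2). -/

import Mathlib

open MeasureTheory
open scoped RealInnerProductSpace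

abbrev Euc (d : ℕ) := EuclideanSpace ℝ (Fin d)

def PolyScal (d r : ℕ) : Set (Euc d → ℝ) :=
  {f | ∃ p : MvPolynomial (Fin d) ℝ, p.totalDegree ≤ r ∧
    ∀ x, f x = MvPolynomial.eval (fun i => x i) p}

def PolyVec (d r : ℕ) : Set (Euc d → Euc d) :=
  {q | ∀ i, (fun x => q x i) ∈ PolyScal d r}

lemma polyScal_cont {d r : ℕ} {f : Euc d → ℝ} (hf : f ∈ PolyScal d r) : Continuous f := by
  obtain ⟨p, -, hp⟩ := hf
  have : f = fun x => MvPolynomial.eval (fun i => x i) p := funext hp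
  rw [this]
  exact p.continuous_eval.comp (continuous_pi fun i => (continuous_apply i).comp (PiLp.continuous_ofLp 2 _))

lemma polyVec_cont {d r : ℕ} {q : Euc d → Euc d} (hq : q ∈ PolyVec d r) : Continuous q := by
  exact (PiLp.continuous_toLp 2 _).comp (continuous_pi (fun i => polyScal_cont (hq i)))

lemma integrableOn_of_cont {d : ℕ} {f : Euc d → ℝ} (hf : Continuous f) {T : Set (Euc d)}
    (hTb : Bornology.IsBounded T) : IntegrableOn f T := by
  exact (hf.continuousOn.integrableOn_compact hTb.isCompact_closure).mono_set subset_closure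

lemma integrable_frontier {d : ℕ} {f : Euc d → ℝ} (hf : Continuous f) {T : Set (Euc d)}
    (hTb : Bornology.IsBounded T) (σ : Measure (Euc d)) [IsFiniteMeasure σ] :
    Integrable f (σ.restrict (frontier T)) := by
  have hK : IsCompact (frontier T) :=
    hTb.isCompact_closure.of_isClosed_subset isClosed_frontier frontier_subset_closure
  obtain ⟨M, hM⟩ := hK.exists_bound_of_continuousOn hf.continuousOn
  refine (integrable_const M).mono' hf.aestronglyMeasurable.restrict ?_
  rw [ae_restrict_iff' isClosed_frontier.measurableSet]
  filter_upwards with x hx using hM x hx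
lemma wg_arith (Ct A W s : ℝ) (hCt : 0 < Ct) (hA : 0 ≤ A) (hW : 0 ≤ W) (hs : 0 ≤ s)
    (hup : W ≤ 2 * A + 2 * (Ct * s)) (hlo : A ≤ 2 * W + 2 * (Ct * s)) :
    (2 * Ct + 2)⁻¹ * (A + s) ≤ W + s ∧ W + s ≤ (2 * Ct + 2) * (A + s) := by
  have hpos : (0:ℝ) < 2 * Ct + 2 := by linarith
  constructor
  · have h2 : A + s ≤ (2 * Ct + 2) * (W + s) := by nlinarith
    calc (2 * Ct + 2)⁻¹ * (A + s) ≤ (2 * Ct + 2)⁻¹ * ((2 * Ct + 2) * (W + s)) :=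
          mul_le_mul_of_nonneg_left h2 (by positivity)
      _ = W + s := by field_simp
  · nlinarith

lemma wg_young {c : ℝ} (hc : 0 < c) (a w t : ℝ) (ht : |t| ≤ w) :
    a * t ≤ c * a ^ 2 + (4 * c)⁻¹ * w ^ 2 := by
  have h1 : a * t ≤ |a| * w := by
    calc a * t ≤ |a * t| := le_abs_self _
      _ = |a| * |t| := abs_mul a t
      _ ≤ |a| * w := by nlinarith [abs_nonneg a]
  have hc4 : (0:ℝ) < 4 * c := by linarith
  have expand : ∀ b : ℝ, (4 * c)⁻¹ * (2 * c * b - w) ^ 2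
      = c * b ^ 2 + (4 * c)⁻¹ * w ^ 2 - b * w := by
    intro b; field_simp; ring
  have expand := expand |a|
  rw [sq_abs] at expand
  have hnn : 0 ≤ (4 * c)⁻¹ * (2 * c * |a| - w) ^ 2 := by positivity
  linarith

/-- equivalence of the discrete `H¹` norm and the triple-bar (energy) norm,
elementwise. There are constants `C₁, C₂ > 0` independent of `h_T` such that for every
shape-regular element (encoded by the polynomial trace–inverse inequality with constant
`Ct`) and every local WG function `v = {v₀, v_b}`,
`C₁(‖∇v₀‖²_T + h_T⁻¹‖Q_b v₀ - v_b‖²_{∂T}) ≤ ‖∇_w v‖²_T + h_T⁻¹‖Q_b v₀ - v_b‖²_{∂T}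
 ≤ C₂(‖∇v₀‖²_T + h_T⁻¹‖Q_b v₀ - v_b‖²_{∂T})`. -/
theorem wg_norm_equivalence (d k : ℕ) (hk : 1 ≤ k) (Ct : ℝ) (hCt : 0 < Ct) :
    ∃ C1 > (0:ℝ), ∃ C2 > (0:ℝ),
      ∀ (T : Set (Euc d)), IsOpen T → T.Nonempty → Bornology.IsBounded T →
      ∀ (hT : ℝ), 0 < hT →
      ∀ (σ : Measure (Euc d)), IsFiniteMeasure σ →
      ∀ (n : Euc d → Euc d), (∀ x, ‖n x‖ ≤ 1) →
      -- trace–inverse inequality for polynomials on the shape-regular element T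
      (∀ q ∈ PolyVec d (k-1),
        (∫ x in frontier T, ‖q x‖ ^ 2 ∂σ) ≤ Ct * hT⁻¹ * ∫ x in T, ‖q x‖ ^ 2) →
      ∀ (v0 : Euc d → ℝ) (g : Euc d → Euc d),
        -- g = ∇v₀ ∈ [P_{k-1}(T)]^d with v₀ ∈ P_k(T)
        v0 ∈ PolyScal d k → g ∈ PolyVec d (k-1) →
        (∀ x, fderiv ℝ v0 x = (innerSL ℝ) (g x)) →
      ∀ (vb Qbv0 : Euc d → ℝ),
        Integrable (fun x => (Qbv0 x - vb x) ^ 2) (σ.restrict (frontier T)) →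
        (∀ q ∈ PolyVec d (k-1),
          Integrable (fun x => (Qbv0 x - vb x) * ⟪q x, n x⟫) (σ.restrict (frontier T))) →
      ∀ (wg : Euc d → Euc d), wg ∈ PolyVec d (k-1) →
        -- ∇_w v: (∇_w v, q)_T = (∇v₀, q)_T + ⟨v_b - Q_b v₀, q·n⟩_{∂T}
        (∀ q ∈ PolyVec d (k-1),
          ∫ x in T, ⟪wg x, q x⟫ =
            (∫ x in T, ⟪g x, q x⟫) +
              ∫ x in frontier T, (vb x - Qbv0 x) * ⟪q x, n x⟫ ∂σ) →
        C1 * ((∫ x in T, ‖g x‖ ^ 2) +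
              hT⁻¹ * ∫ x in frontier T, (Qbv0 x - vb x) ^ 2 ∂σ) ≤
          (∫ x in T, ‖wg x‖ ^ 2) +
              hT⁻¹ * ∫ x in frontier T, (Qbv0 x - vb x) ^ 2 ∂σ ∧
        (∫ x in T, ‖wg x‖ ^ 2) +
              hT⁻¹ * ∫ x in frontier T, (Qbv0 x - vb x) ^ 2 ∂σ ≤
          C2 * ((∫ x in T, ‖g x‖ ^ 2) +
              hT⁻¹ * ∫ x in frontier T, (Qbv0 x - vb x) ^ 2 ∂σ) := by
  refine ⟨(2*Ct+2)⁻¹, by positivity, 2*Ct+2, by positivity, ?_⟩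
  intro T hTo hTne hTb hT hhT σ hσfin n hn htrace v0 g hv0 hg hgrad vb Qbv0 hsq hib wg hwg hident
  set A := ∫ x in T, ‖g x‖ ^ 2 with hA
  set W := ∫ x in T, ‖wg x‖ ^ 2 with hW
  set B := ∫ x in frontier T, (Qbv0 x - vb x) ^ 2 ∂σ with hB
  have hgc : Continuous g := polyVec_cont hg
  have hwgc : Continuous wg := polyVec_cont hwg
  have hIgw : IntegrableOn (fun x => ⟪g x, wg x⟫) T := integrableOn_of_cont (hgc.inner hwgc) hTb
  have hIwg : IntegrableOn (fun x => ⟪wg x, g x⟫) T := integrableOn_of_cont (hwgc.inner hgc) hTb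
  have hIg2 : IntegrableOn (fun x => ‖g x‖ ^ 2) T := integrableOn_of_cont (hgc.norm.pow 2) hTb
  have hIw2 : IntegrableOn (fun x => ‖wg x‖ ^ 2) T := integrableOn_of_cont (hwgc.norm.pow 2) hTb
  have hFg2 : Integrable (fun x => ‖g x‖ ^ 2) (σ.restrict (frontier T)) :=
    integrable_frontier (hgc.norm.pow 2) hTb σ
  have hFw2 : Integrable (fun x => ‖wg x‖ ^ 2) (σ.restrict (frontier T)) :=
    integrable_frontier (hwgc.norm.pow 2) hTb σ
  have hA0 : 0 ≤ A := integral_nonneg fun x => by positivity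
  have hW0 : 0 ≤ W := integral_nonneg fun x => by positivity
  have hB0 : 0 ≤ B := integral_nonneg fun x => by positivity
  have hc : (0:ℝ) < Ct * hT⁻¹ := by positivity
  set c := Ct * hT⁻¹ with hcdef
  have hinn : ∀ (q : Euc d → Euc d) (x), |⟪q x, n x⟫| ≤ ‖q x‖ := by
    intro q x
    calc |⟪q x, n x⟫| ≤ ‖q x‖ * ‖n x‖ := abs_real_inner_le_norm _ _
      _ ≤ ‖q x‖ * 1 := by nlinarith [norm_nonneg (q x), hn x]
      _ = ‖q x‖ := mul_one _
  have htr_w : (∫ x in frontier T, ‖wg x‖ ^ 2 ∂σ) ≤ c * W := htrace wg hwg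
  have htr_g : (∫ x in frontier T, ‖g x‖ ^ 2 ∂σ) ≤ c * A := htrace g hg
  -- ==== Upper bound: W ≤ 2A + 2cB ====
  have hup : W ≤ 2 * A + 2 * (c * B) := by
    have hid := hident wg hwg
    have hWeq : (∫ x in T, ⟪wg x, wg x⟫) = W := by
      simp only [hW, real_inner_self_eq_norm_sq]
    rw [hWeq] at hid
    have e1 : (∫ x in T, ⟪g x, wg x⟫) ≤ A + (1/4) * W := by
      have h : (∫ x in T, ⟪g x, wg x⟫) ≤ ∫ x in T, (‖g x‖^2 + (1/4) * ‖wg x‖^2) := by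
        refine integral_mono hIgw (hIg2.add (hIw2.const_mul (1/4))) (fun x => ?_)
        have := real_inner_le_norm (g x) (wg x)
        nlinarith [sq_nonneg (‖g x‖ - ‖wg x‖/2)]
      rwa [integral_add hIg2 (hIw2.const_mul (1/4)), integral_const_mul] at h
    have e2 : (∫ x in frontier T, (vb x - Qbv0 x) * ⟪wg x, n x⟫ ∂σ)
        ≤ c * B + (4*c)⁻¹ * (c * W) := by
      have hIL : Integrable (fun x => (vb x - Qbv0 x) * ⟪wg x, n x⟫) (σ.restrict (frontier T)) := by
        have heq : (fun x => (vb x - Qbv0 x) * ⟪wg x, n x⟫)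
            = fun x => -((Qbv0 x - vb x) * ⟪wg x, n x⟫) := by funext x; ring
        rw [heq]; exact (hib wg hwg).neg
      have step : (∫ x in frontier T, (vb x - Qbv0 x) * ⟪wg x, n x⟫ ∂σ)
          ≤ ∫ x in frontier T, (c * (Qbv0 x - vb x)^2 + (4*c)⁻¹ * ‖wg x‖^2) ∂σ := by
        refine integral_mono hIL ((hsq.const_mul c).add (hFw2.const_mul ((4*c)⁻¹))) (fun x => ?_)
        have h := wg_young hc (vb x - Qbv0 x) (‖wg x‖) (⟪wg x, n x⟫) (hinn wg x)
        have heq : (vb x - Qbv0 x)^2 = (Qbv0 x - vb x)^2 := by ring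
        rw [heq] at h; exact h
      rw [integral_add (hsq.const_mul c) (hFw2.const_mul ((4*c)⁻¹)), integral_const_mul,
        integral_const_mul] at step
      have h2 : (4*c)⁻¹ * (∫ x in frontier T, ‖wg x‖ ^ 2 ∂σ) ≤ (4*c)⁻¹ * (c * W) :=
        mul_le_mul_of_nonneg_left htr_w (by positivity)
      linarith
    have hq : (4*c)⁻¹ * (c * W) = (1/4) * W := by field_simp
    rw [hq] at e2
    linarith
  -- ==== Lower bound: A ≤ 2W + 2cB ====
  have hlo : A ≤ 2 * W + 2 * (c * B) := by
    have hid := hident g hg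
    have hAeq : (∫ x in T, ⟪g x, g x⟫) = A := by
      simp only [hA, real_inner_self_eq_norm_sq]
    rw [hAeq] at hid
    have e1 : (∫ x in T, ⟪wg x, g x⟫) ≤ W + (1/4) * A := by
      have h : (∫ x in T, ⟪wg x, g x⟫) ≤ ∫ x in T, (‖wg x‖^2 + (1/4) * ‖g x‖^2) := by
        refine integral_mono hIwg (hIw2.add (hIg2.const_mul (1/4))) (fun x => ?_)
        have := real_inner_le_norm (wg x) (g x)
        nlinarith [sq_nonneg (‖wg x‖ - ‖g x‖/2)]
      rwa [integral_add hIw2 (hIg2.const_mul (1/4)), integral_const_mul] at h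
    have e2 : -(∫ x in frontier T, (vb x - Qbv0 x) * ⟪g x, n x⟫ ∂σ)
        ≤ c * B + (4*c)⁻¹ * (c * A) := by
      have hIL : Integrable (fun x => (Qbv0 x - vb x) * ⟪g x, n x⟫) (σ.restrict (frontier T)) :=
        hib g hg
      have hneg : -(∫ x in frontier T, (vb x - Qbv0 x) * ⟪g x, n x⟫ ∂σ)
          = ∫ x in frontier T, (Qbv0 x - vb x) * ⟪g x, n x⟫ ∂σ := by
        rw [← integral_neg]
        congr 1; funext x; ring
      rw [hneg]
      have step : (∫ x in frontier T, (Qbv0 x - vb x) * ⟪g x, n x⟫ ∂σ)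
          ≤ ∫ x in frontier T, (c * (Qbv0 x - vb x)^2 + (4*c)⁻¹ * ‖g x‖^2) ∂σ := by
        refine integral_mono hIL ((hsq.const_mul c).add (hFg2.const_mul ((4*c)⁻¹))) (fun x => ?_)
        exact wg_young hc (Qbv0 x - vb x) (‖g x‖) (⟪g x, n x⟫) (hinn g x)
      rw [integral_add (hsq.const_mul c) (hFg2.const_mul ((4*c)⁻¹)), integral_const_mul,
        integral_const_mul] at step
      have h2 : (4*c)⁻¹ * (∫ x in frontier T, ‖g x‖ ^ 2 ∂σ) ≤ (4*c)⁻¹ * (c * A) :=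
        mul_le_mul_of_nonneg_left htr_g (by positivity)
      linarith
    have hq : (4*c)⁻¹ * (c * A) = (1/4) * A := by field_simp
    rw [hq] at e2
    linarith
  -- ==== conclude ====
  have hs0 : 0 ≤ hT⁻¹ * B := by positivity
  have hcB : c * B = Ct * (hT⁻¹ * B) := by rw [hcdef]; ring
  rw [hcB] at hup hlo
  exact wg_arith Ct A W (hT⁻¹ * B) hCt hA0 hW0 hs0 hup hlo
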